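/- Green's relation 𝓗 on the semigroup 𝐈ℕ∞ is trivial: for α, β ∈ 𝐈ℕ∞, α 𝓗 β if and only if α = β. -/

import Mathlib

/-- Partial transformations of the set ℕ of positive integers. -/
abbrev PMapN : Type := ℕ+ → Option ℕ+

/-- The domain of a partial transformation. -/
def pdom (f : PMapN) : Set ℕ+ := {n | f n ≠ none}

/-- The range of a partial transformation. -/
def pran (f : PMapN) : Set ℕ+ := {m | ∃ n, f n = some m}

/-- Composition of partial transformations: `pmul f g` applies `g` first and then `f`. -/
def pmul (f g : PMapN) : PMapN := fun n => (g n).bind f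

/-- The identity transformation 𝕀 of ℕ. -/
def pid : PMapN := fun n => some n

/-- `f` is a partial bijection (an injective partial map). -/
def IsPartialBij (f : PMapN) : Prop :=
  ∀ ⦃m n a⦄, f m = some a → f n = some a → m = n

/-- `f` is a partial isometry with respect to the metric `d(m, n) = |m - n|`. -/
def IsIsometry (f : PMapN) : Prop :=
  ∀ ⦃m n a b⦄, f m = some a → f n = some b →
    |((a : ℕ) : ℤ) - ((b : ℕ) : ℤ)| = |((m : ℕ) : ℤ) - ((n : ℕ) : ℤ)|

/-- Membership in the inverse monoid `𝐈ℕ∞` of partial cofinite isometries of ℕ: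
a partial bijection of ℕ with cofinite domain and cofinite range preserving distances. -/
def InIN (f : PMapN) : Prop :=
  IsPartialBij f ∧ (pdom f)ᶜ.Finite ∧ (pran f)ᶜ.Finite ∧ IsIsometry f

/-- Green's relation 𝓛 on the monoid `𝐈ℕ∞`. -/
def GreenL (a b : PMapN) : Prop :=
  (∃ u, InIN u ∧ pmul u a = b) ∧ (∃ v, InIN v ∧ pmul v b = a)

/-- Green's relation 𝓡 on the monoid `𝐈ℕ∞`. -/
def GreenR (a b : PMapN) : Prop :=
  (∃ u, InIN u ∧ pmul a u = b) ∧ (∃ v, InIN v ∧ pmul b v = a)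

/-- Green's relation 𝓗 is the intersection of 𝓛 and 𝓡. -/
def GreenH (a b : PMapN) : Prop := GreenL a b ∧ GreenR a b

/-- Every element of `𝐈ℕ∞` acts as a fixed translation on its domain. -/
lemma translation_lemma (f : PMapN) (hf : InIN f) {m n a b : ℕ+}
    (hm : f m = some a) (hn : f n = some b) :
    ((a : ℕ) : ℤ) - ((b : ℕ) : ℤ) = ((m : ℕ) : ℤ) - ((n : ℕ) : ℤ) := by
  obtain ⟨hbij, hdom, hran, hiso⟩ := hf
  have hdomInf : (pdom f).Infinite := by
    have := hdom.infinite_compl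
    rwa [compl_compl] at this
  obtain ⟨k, hk, hkgt⟩ := hdomInf.exists_gt (m + a + n + b)
  obtain ⟨c, hc⟩ := Option.ne_none_iff_exists'.mp hk
  have d1 := abs_eq_abs.mp (hiso hc hm)
  have d2 := abs_eq_abs.mp (hiso hc hn)
  have hkgt' : ((m : ℕ) : ℤ) + a + n + b < ((k : ℕ) : ℤ) := by
    have := (PNat.coe_lt_coe _ _).mpr hkgt
    push_cast at this ⊢
    omega
  have hc1 : (1 : ℤ) ≤ ((c : ℕ) : ℤ) := by exact_mod_cast c.one_le
  have ha1 : (1 : ℤ) ≤ ((a : ℕ) : ℤ) := by exact_mod_cast a.one_le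
  have hb1 : (1 : ℤ) ≤ ((b : ℕ) : ℤ) := by exact_mod_cast b.one_le
  omega

/-- A nonempty subset of `ℕ+` cannot admit an infinite strict descent by a fixed step. -/
lemma no_descent (D : Set ℕ+) (hD : D.Nonempty) (e : ℤ) (he : 0 < e)
    (h : ∀ n ∈ D, ∃ m ∈ D, ((m : ℕ) : ℤ) = ((n : ℕ) : ℤ) - e) : False := by
  have key : ∀ N : ℕ, ∀ n : ℕ+, (n : ℕ) = N → n ∈ D → False := by
    intro N
    induction N using Nat.strong_induction_on with
    | _ N ih =>
      intro n hn hnD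
      obtain ⟨m, hmD, hme⟩ := h n hnD
      have hlt : (m : ℕ) < N := by omega
      exact ih _ hlt m rfl hmD
  obtain ⟨n0, hn0⟩ := hD
  exact key _ n0 rfl hn0

/-- Elements of `𝐈ℕ∞` with the same domain and the same range are equal. -/
lemma eq_of_dom_ran (α β : PMapN) (hα : InIN α) (hβ : InIN β)
    (hdom : pdom α = pdom β) (hran : pran α = pran β) : α = β := by
  have hDne : (pdom α).Nonempty := by
    have := hα.2.1.infinite_compl
    rw [compl_compl] at this
    exact this.nonempty
  obtain ⟨n0, hn0⟩ := hDne
  obtain ⟨a0, ha0⟩ := Option.ne_none_iff_exists'.mp hn0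
  obtain ⟨b0, hb0⟩ := Option.ne_none_iff_exists'.mp (hdom ▸ hn0)
  set cA : ℤ := ((a0 : ℕ) : ℤ) - ((n0 : ℕ) : ℤ) with hcA
  set cB : ℤ := ((b0 : ℕ) : ℤ) - ((n0 : ℕ) : ℤ) with hcB
  -- values of α and β are translations by cA and cB
  have hAval : ∀ ⦃n a : ℕ+⦄, α n = some a → ((a : ℕ) : ℤ) = ((n : ℕ) : ℤ) + cA := by
    intro n a h
    have := translation_lemma α hα h ha0
    omega
  have hBval : ∀ ⦃n b : ℕ+⦄, β n = some b → ((b : ℕ) : ℤ) = ((n : ℕ) : ℤ) + cB := by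
    intro n b h
    have := translation_lemma β hβ h hb0
    omega
  -- the constants agree
  have hc : cA = cB := by
    rcases lt_trichotomy cA cB with hlt | heq | hgt
    · -- descent on pdom α using pran α ⊆ pran β
      exfalso
      refine no_descent (pdom α) ⟨n0, hn0⟩ (cB - cA) (by omega) ?_
      intro n hn
      obtain ⟨a, ha⟩ := Option.ne_none_iff_exists'.mp hn
      have haran : a ∈ pran β := hran ▸ ⟨n, ha⟩
      obtain ⟨m, hm⟩ := haran
      have hmdom : m ∈ pdom α := by
        rw [hdom]; exact fun h => by simp [h] at hm
      refine ⟨m, hmdom, ?_⟩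
      have h1 := hAval ha
      have h2 := hBval hm
      omega
    · exact heq
    · -- descent on pdom β using pran β ⊆ pran α
      exfalso
      refine no_descent (pdom β) ⟨n0, hdom ▸ hn0⟩ (cA - cB) (by omega) ?_
      intro n hn
      obtain ⟨b, hb⟩ := Option.ne_none_iff_exists'.mp hn
      have hbran : b ∈ pran α := hran ▸ ⟨n, hb⟩
      obtain ⟨m, hm⟩ := hbran
      have hmdom : m ∈ pdom β := by
        rw [← hdom]; exact fun h => by simp [h] at hm
      refine ⟨m, hmdom, ?_⟩
      have h1 := hBval hb
      have h2 := hAval hm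
      omega
  funext n
  by_cases hn : n ∈ pdom α
  · obtain ⟨a, ha⟩ := Option.ne_none_iff_exists'.mp hn
    obtain ⟨b, hb⟩ := Option.ne_none_iff_exists'.mp (hdom ▸ hn)
    have h1 := hAval ha
    have h2 := hBval hb
    have : ((a : ℕ) : ℤ) = ((b : ℕ) : ℤ) := by omega
    have hab : a = b := by
      have : (a : ℕ) = (b : ℕ) := by exact_mod_cast this
      exact PNat.coe_injective this
    rw [ha, hb, hab]
  · have hn' : n ∉ pdom β := hdom ▸ hn
    have h1 : α n = none := not_not.mp hn
    have h2 : β n = none := not_not.mp hn'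
    rw [h1, h2]

lemma pid_in : InIN pid := by
  refine ⟨?_, ?_, ?_, ?_⟩
  · intro m n a hm hn
    simp only [pid, Option.some.injEq] at hm hn
    rw [hm, hn]
  · have : (pdom pid)ᶜ = ∅ := by
      ext n; simp [pdom, pid]
    rw [this]; exact Set.finite_empty
  · have : (pran pid)ᶜ = ∅ := by
      ext n; simp [pran, pid]
    rw [this]; exact Set.finite_empty
  · intro m n a b hm hn
    simp only [pid, Option.some.injEq] at hm hn
    rw [← hm, ← hn]

lemma pmul_pid_left (f : PMapN) : pmul pid f = f := by
  funext n
  simp [pmul, pid]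
  cases f n <;> rfl

lemma pmul_pid_right (f : PMapN) : pmul f pid = f := by
  funext n
  simp [pmul, pid]

lemma pdom_pmul_subset (f g : PMapN) : pdom (pmul f g) ⊆ pdom g := by
  intro n hn h
  apply hn
  show (g n).bind f = none
  rw [h]; rfl

lemma pran_pmul_subset (f g : PMapN) : pran (pmul f g) ⊆ pran f := by
  rintro a ⟨n, hn⟩
  change (g n).bind f = some a at hn
  cases h : g n with
  | none => rw [h] at hn; cases hn
  | some k => rw [h] at hn; exact ⟨k, hn⟩

/-- Green's relation 𝓗 on `𝐈ℕ∞` is trivial: for `α, β ∈ 𝐈ℕ∞`,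
`α 𝓗 β` if and only if `α = β`. -/
theorem stmt7 (α β : PMapN) (hα : InIN α) (hβ : InIN β) :
    GreenH α β ↔ α = β := by
  constructor
  · rintro ⟨⟨⟨u, _, hu⟩, ⟨v, _, hv⟩⟩, ⟨⟨s, _, hs⟩, ⟨t, _, ht⟩⟩⟩
    apply eq_of_dom_ran α β hα hβ
    · exact Set.Subset.antisymm (hv ▸ pdom_pmul_subset v β) (hu ▸ pdom_pmul_subset u α)
    · exact Set.Subset.antisymm (ht ▸ pran_pmul_subset β t) (hs ▸ pran_pmul_subset α s)
  · rintro rfl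
    exact ⟨⟨⟨pid, pid_in, pmul_pid_left α⟩, ⟨pid, pid_in, pmul_pid_left α⟩⟩,
      ⟨⟨pid, pid_in, pmul_pid_right α⟩, ⟨pid, pid_in, pmul_pid_right α⟩⟩⟩
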